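/- Let G be a finite simple graph, d ≥ 1 an integer, u a vertex of G, and let H be obtained from G by attaching a pendant clique C of r ≥ 2d+1 vertices to u. Then a set of edges F ⊆ E(G) is the edge cut of a d-cut of G if and only if F is the edge cut of a d-cut of H; moreover the same equivalence holds with 'd-cut' replaced by 'minimal d-cut' and by 'maximal d-cut'. -/
import Mathlib


variable {V : Type*}

/-- A `d`-cut of a simple graph `G`: a partition `(A, B)` of the vertex set into two
nonempty parts such that every vertex of `A` has at most `d` neighbors in `B` and
every vertex of `B` has at most `d` neighbors in `A`. -/
def IsDCut (G : SimpleGraph V) (d : ℕ) (A B : Set V) : Prop :=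
  A.Nonempty ∧ B.Nonempty ∧ Disjoint A B ∧ A ∪ B = Set.univ ∧
    (∀ v ∈ A, (G.neighborSet v ∩ B).ncard ≤ d) ∧
    (∀ v ∈ B, (G.neighborSet v ∩ A).ncard ≤ d)

/-- A vertex set `T` is monochromatic if every `d`-cut of `G` has `T` entirely on one side. -/
def Monochromatic (G : SimpleGraph V) (d : ℕ) (T : Set V) : Prop :=
  ∀ A B : Set V, IsDCut G d A B → T ⊆ A ∨ T ⊆ B

/-- The edge cut of a cut `(A, B)`: the set of edges of `G` with one endpoint in `A`
and the other endpoint in `B`. -/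
def edgeCut (G : SimpleGraph V) (A B : Set V) : Set (Sym2 V) :=
  {e | e ∈ G.edgeSet ∧ ∃ u v, e = s(u, v) ∧ u ∈ A ∧ v ∈ B}

/-- A minimal `d`-cut: no `d`-cut has an edge cut that is a proper subset of its edge cut. -/
def IsMinimalDCut (G : SimpleGraph V) (d : ℕ) (A B : Set V) : Prop :=
  IsDCut G d A B ∧ ∀ A' B' : Set V, IsDCut G d A' B' → ¬ edgeCut G A' B' ⊂ edgeCut G A B

/-- A maximal `d`-cut: no `d`-cut has an edge cut that properly contains its edge cut. -/
def IsMaximalDCut (G : SimpleGraph V) (d : ℕ) (A B : Set V) : Prop :=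
  IsDCut G d A B ∧ ∀ A' B' : Set V, IsDCut G d A' B' → ¬ edgeCut G A B ⊂ edgeCut G A' B'

/-- The graph obtained from `G` by attaching a pendant clique of `r` new vertices to `u`:
the `r` new vertices are pairwise adjacent, each of them is adjacent to `u`, and no
other edges are added. -/
def attachPendantClique (G : SimpleGraph V) (u : V) (r : ℕ) :
    SimpleGraph (V ⊕ Fin r) :=
  SimpleGraph.fromRel (fun a b =>
    (∃ x y : V, a = Sum.inl x ∧ b = Sum.inl y ∧ G.Adj x y) ∨
    (∃ c : Fin r, a = Sum.inl u ∧ b = Sum.inr c) ∨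
    (∃ c c' : Fin r, a = Sum.inr c ∧ b = Sum.inr c'))

section helpers
variable {G : SimpleGraph V} {u : V} {r : ℕ}

lemma apc_inl_inl {x y : V} :
    (attachPendantClique G u r).Adj (Sum.inl x) (Sum.inl y) ↔ G.Adj x y := by
  simp [attachPendantClique, SimpleGraph.fromRel_adj]
  constructor
  · rintro ⟨-, h | h⟩
    exacts [h, h.symm]
  · exact fun h => ⟨h.ne, Or.inl h⟩

lemma apc_inl_inr {x : V} {c : Fin r} :
    (attachPendantClique G u r).Adj (Sum.inl x) (Sum.inr c) ↔ x = u := by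
  simp [attachPendantClique, SimpleGraph.fromRel_adj]

lemma apc_inr_inl {x : V} {c : Fin r} :
    (attachPendantClique G u r).Adj (Sum.inr c) (Sum.inl x) ↔ x = u := by
  simp [attachPendantClique, SimpleGraph.fromRel_adj, eq_comm]

lemma apc_inr_inr {c c' : Fin r} :
    (attachPendantClique G u r).Adj (Sum.inr c) (Sum.inr c') ↔ c ≠ c' := by
  simp [attachPendantClique, SimpleGraph.fromRel_adj]

lemma isDCut_symm {d : ℕ} {A B : Set V} (h : IsDCut G d A B) : IsDCut G d B A :=
  ⟨h.2.1, h.1, h.2.2.1.symm, Set.union_comm A B ▸ h.2.2.2.1,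
    h.2.2.2.2.2, h.2.2.2.2.1⟩

lemma edgeCut_comm {A B : Set V} : edgeCut G A B = edgeCut G B A := by
  ext e
  constructor <;> rintro ⟨he, a, b, rfl, ha, hb⟩ <;>
    exact ⟨by rwa [Sym2.eq_swap] at he ⊢, b, a, Sym2.eq_swap, hb, ha⟩

lemma image_ssubset {α β : Type*} {f : α → β} (hf : Function.Injective f) {s t : Set α} :
    f '' s ⊂ f '' t ↔ s ⊂ t := by
  simp [Set.ssubset_def, Set.image_subset_image_iff hf]

-- intersection of a neighbor set of an inl vertex with an inl-image
lemma nbhd_inter_inl (x : V) (S : Set V) :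
    (attachPendantClique G u r).neighborSet (Sum.inl x) ∩ Sum.inl '' S
      = Sum.inl '' (G.neighborSet x ∩ S) := by
  ext a
  cases a with
  | inl y => simp [SimpleGraph.mem_neighborSet, apc_inl_inl]
  | inr c => simp [SimpleGraph.mem_neighborSet]

lemma nbhd_inl_ne (y : V) (hy : y ≠ u) (A : Set V) :
    (attachPendantClique G u r).neighborSet (Sum.inl y)
        ∩ (Sum.inl '' A ∪ Set.range Sum.inr) = Sum.inl '' (G.neighborSet y ∩ A) := by
  ext a
  cases a with
  | inl x => simp [SimpleGraph.mem_neighborSet, apc_inl_inl]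
  | inr c => simp [SimpleGraph.mem_neighborSet, apc_inl_inr, hy]

lemma nbhd_inr_inter (c : Fin r) {B : Set V} (hu : u ∉ B) :
    (attachPendantClique G u r).neighborSet (Sum.inr c) ∩ Sum.inl '' B = ∅ := by
  ext a
  cases a with
  | inl y =>
      simp only [Set.mem_inter_iff, SimpleGraph.mem_neighborSet, apc_inr_inl]
      simp only [Set.mem_empty_iff_false, iff_false, not_and]
      rintro rfl hy
      simp only [Set.mem_image, Sum.inl.injEq] at hy
      obtain ⟨z, hz, rfl⟩ := hy
      exact hu hz
  | inr c' => simp [SimpleGraph.mem_neighborSet]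
end helpers

section main
variable {G : SimpleGraph V} {u : V} {d r : ℕ}

lemma clique_nosplit [Fintype V] (hr : 2 * d + 1 ≤ r) {A B : Set (V ⊕ Fin r)}
    (h : IsDCut (attachPendantClique G u r) d A B) :
    Set.range (Sum.inr : Fin r → V ⊕ Fin r) ⊆ A ∨
      Set.range (Sum.inr : Fin r → V ⊕ Fin r) ⊆ B := by
  obtain ⟨hA, hB, hdisj, hcov, hAd, hBd⟩ := h
  set CA : Set (Fin r) := {c | Sum.inr c ∈ A} with hCA
  set CB : Set (Fin r) := {c | Sum.inr c ∈ B} with hCB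
  have hcup : CA ∪ CB = Set.univ := by
    ext c
    have := hcov.symm ▸ Set.mem_univ (Sum.inr c : V ⊕ Fin r)
    simpa [hCA, hCB] using this
  by_contra hcon
  push_neg at hcon
  obtain ⟨h1, h2⟩ := hcon
  have hCBne : CB.Nonempty := by
    obtain ⟨a, ha⟩ := Set.not_subset.mp h1
    obtain ⟨c, rfl⟩ := ha.1
    have : Sum.inr c ∈ A ∪ B := hcov ▸ Set.mem_univ _
    exact ⟨c, this.resolve_left ha.2⟩
  have hCAne : CA.Nonempty := by
    obtain ⟨a, ha⟩ := Set.not_subset.mp h2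
    obtain ⟨c, rfl⟩ := ha.1
    have : Sum.inr c ∈ A ∪ B := hcov ▸ Set.mem_univ _
    exact ⟨c, this.resolve_right ha.2⟩
  obtain ⟨c, hc⟩ := hCAne
  obtain ⟨c', hc'⟩ := hCBne
  have key : ∀ (X Y : Set (V ⊕ Fin r)) (CX CY : Set (Fin r)), Disjoint X Y →
      (∀ v ∈ X, ((attachPendantClique G u r).neighborSet v ∩ Y).ncard ≤ d) →
      CX = {c | Sum.inr c ∈ X} → CY = {c | Sum.inr c ∈ Y} →
      ∀ c0 ∈ CX, CY.ncard ≤ d := by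
    intro X Y CX CY hdXY hdeg hX hY c0 hc0
    have hsub : Sum.inr '' CY ⊆
        (attachPendantClique G u r).neighborSet (Sum.inr c0) ∩ Y := by
      rintro a ⟨c1, hc1, rfl⟩
      refine ⟨?_, by rwa [hY] at hc1⟩
      rw [SimpleGraph.mem_neighborSet, apc_inr_inr]
      rintro rfl
      rw [hY] at hc1; rw [hX] at hc0
      exact (hdXY.ne_of_mem hc0 hc1) rfl
    calc CY.ncard = (Sum.inr '' CY).ncard :=
          (Set.ncard_image_of_injective _ Sum.inr_injective).symm
      _ ≤ _ := Set.ncard_le_ncard hsub (Set.toFinite _)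
      _ ≤ d := hdeg _ (by rwa [hX] at hc0)
  have hCBle : CB.ncard ≤ d := key A B CA CB hdisj hAd hCA hCB c hc
  have hCAle : CA.ncard ≤ d := key B A CB CA hdisj.symm hBd hCB hCA c' hc'
  have : r ≤ 2 * d := by
    calc r = (Set.univ : Set (Fin r)).ncard := by simp [Set.ncard_univ]
      _ = (CA ∪ CB).ncard := by rw [hcup]
      _ ≤ CA.ncard + CB.ncard := Set.ncard_union_le _ _
      _ ≤ d + d := Nat.add_le_add hCAle hCBle
      _ = 2 * d := by ring
  omega

lemma u_side [Fintype V] (hr : 2 * d + 1 ≤ r) {A B : Set (V ⊕ Fin r)}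
    (h : IsDCut (attachPendantClique G u r) d A B)
    (hC : Set.range (Sum.inr : Fin r → V ⊕ Fin r) ⊆ A) : Sum.inl u ∈ A := by
  obtain ⟨hA, hB, hdisj, hcov, hAd, hBd⟩ := h
  by_contra hu
  have huB : Sum.inl u ∈ B := by
    have : (Sum.inl u : V ⊕ Fin r) ∈ A ∪ B := hcov ▸ Set.mem_univ _
    exact this.resolve_left hu
  have hsub : Set.range (Sum.inr : Fin r → V ⊕ Fin r) ⊆
      (attachPendantClique G u r).neighborSet (Sum.inl u) ∩ A := by
    rintro a ⟨c, rfl⟩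
    exact ⟨by rw [SimpleGraph.mem_neighborSet, apc_inl_inr], hC ⟨c, rfl⟩⟩
  have : r ≤ d := by
    calc r = (Set.range (Sum.inr : Fin r → V ⊕ Fin r)).ncard := by
          rw [Set.image_univ.symm, Set.ncard_image_of_injective _ Sum.inr_injective,
            Set.ncard_univ]; simp
      _ ≤ _ := Set.ncard_le_ncard hsub (Set.toFinite _)
      _ ≤ d := hBd _ huB
  omega
end main

section main2
variable {G : SimpleGraph V} {u : V} {d r : ℕ}

lemma restrict_deg [Fintype V] {A B : Set (V ⊕ Fin r)}
    (hdeg : ∀ v ∈ A, ((attachPendantClique G u r).neighborSet v ∩ B).ncard ≤ d) :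
    ∀ v ∈ Sum.inl ⁻¹' A, (G.neighborSet v ∩ Sum.inl ⁻¹' B).ncard ≤ d := by
  intro v hv
  have hsub : Sum.inl '' (G.neighborSet v ∩ Sum.inl ⁻¹' B) ⊆
      (attachPendantClique G u r).neighborSet (Sum.inl v) ∩ B := by
    rintro a ⟨w, ⟨hw, hwB⟩, rfl⟩
    exact ⟨by rw [SimpleGraph.mem_neighborSet, apc_inl_inl]; exact hw, hwB⟩
  calc (G.neighborSet v ∩ Sum.inl ⁻¹' B).ncard
      = (Sum.inl '' (G.neighborSet v ∩ Sum.inl ⁻¹' B)).ncard :=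
        (Set.ncard_image_of_injective _ Sum.inl_injective).symm
    _ ≤ _ := Set.ncard_le_ncard hsub (Set.toFinite _)
    _ ≤ d := hdeg _ hv

lemma restrict_edgeCut {A B : Set (V ⊕ Fin r)} (hdisj : Disjoint A B)
    (hC : Set.range (Sum.inr : Fin r → V ⊕ Fin r) ⊆ A) (hu : Sum.inl u ∈ A) :
    edgeCut (attachPendantClique G u r) A B
      = Sym2.map Sum.inl '' edgeCut G (Sum.inl ⁻¹' A) (Sum.inl ⁻¹' B) := by
  ext e
  constructor
  · rintro ⟨he, a, b, rfl, ha, hb⟩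
    rw [SimpleGraph.mem_edgeSet] at he
    cases b with
    | inr c => exact absurd (hC ⟨c, rfl⟩) (Set.disjoint_right.mp hdisj hb)
    | inl y =>
      cases a with
      | inr c =>
        rw [apc_inr_inl] at he
        subst he
        exact absurd hu (Set.disjoint_right.mp hdisj hb)
      | inl x =>
        rw [apc_inl_inl] at he
        exact ⟨s(x, y), ⟨G.mem_edgeSet.mpr he, x, y, rfl, ha, hb⟩, rfl⟩
  · rintro ⟨f, ⟨hf, x, y, rfl, hx, hy⟩, rfl⟩
    rw [SimpleGraph.mem_edgeSet] at hf
    exact ⟨(attachPendantClique G u r).mem_edgeSet.mpr (apc_inl_inl.mpr hf), Sum.inl x, Sum.inl y,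
      rfl, hx, hy⟩

lemma restrict_full [Fintype V] (hr : 2 * d + 1 ≤ r) {A B : Set (V ⊕ Fin r)}
    (h : IsDCut (attachPendantClique G u r) d A B) :
    ∃ A' B' : Set V, IsDCut G d A' B' ∧
      edgeCut (attachPendantClique G u r) A B = Sym2.map Sum.inl '' edgeCut G A' B' := by
  -- by symmetry reduce to the case where the clique is in A
  have key : ∀ A B : Set (V ⊕ Fin r), IsDCut (attachPendantClique G u r) d A B →
      Set.range (Sum.inr : Fin r → V ⊕ Fin r) ⊆ A →
      ∃ A' B' : Set V, IsDCut G d A' B' ∧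
        edgeCut (attachPendantClique G u r) A B = Sym2.map Sum.inl '' edgeCut G A' B' := by
    intro A B h hC
    have huA : Sum.inl u ∈ A := u_side hr h hC
    obtain ⟨hA, hB, hdisj, hcov, hAd, hBd⟩ := h
    refine ⟨Sum.inl ⁻¹' A, Sum.inl ⁻¹' B, ⟨⟨u, huA⟩, ?_, hdisj.preimage _, ?_,
      restrict_deg hAd, restrict_deg hBd⟩, restrict_edgeCut hdisj hC huA⟩
    · obtain ⟨b, hb⟩ := hB
      cases b with
      | inl y => exact ⟨y, hb⟩
      | inr c => exact absurd (hC ⟨c, rfl⟩) (Set.disjoint_right.mp hdisj hb)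
    · ext v
      have : (Sum.inl v : V ⊕ Fin r) ∈ A ∪ B := hcov ▸ Set.mem_univ _
      simpa using this
  rcases clique_nosplit hr h with hC | hC
  · exact key A B h hC
  · obtain ⟨A', B', h', hcut⟩ := key B A (isDCut_symm h) hC
    exact ⟨B', A', isDCut_symm h', by rw [edgeCut_comm, hcut, edgeCut_comm]⟩
end main2

section main3
variable {G : SimpleGraph V} {u : V} {d r : ℕ}

lemma lift_dcut [Fintype V] {A B : Set V} (h : IsDCut G d A B) (hu : u ∈ A) :
    IsDCut (attachPendantClique G u r) d (Sum.inl '' A ∪ Set.range Sum.inr)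
      (Sum.inl '' B) := by
  obtain ⟨hA, hB, hdisj, hcov, hAd, hBd⟩ := h
  refine ⟨⟨Sum.inl u, Or.inl ⟨u, hu, rfl⟩⟩, hB.image _, ?_, ?_, ?_, ?_⟩
  · rw [Set.disjoint_left]
    rintro a (⟨x, hx, rfl⟩ | ⟨c, rfl⟩)
    · rintro ⟨y, hy, hxy⟩
      rw [Sum.inl.injEq] at hxy
      exact Set.disjoint_left.mp hdisj hx (hxy ▸ hy)
    · rintro ⟨y, _, hxy⟩
      exact Sum.inr_ne_inl hxy.symm
  · ext a
    cases a with
    | inl x =>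
      have : x ∈ A ∪ B := hcov ▸ Set.mem_univ _
      simp only [Set.mem_union, Set.mem_image, Sum.inl.injEq, Set.mem_range,
        Set.mem_univ, iff_true]
      rcases this with hx | hx
      · exact Or.inl (Or.inl ⟨x, hx, rfl⟩)
      · exact Or.inr ⟨x, hx, rfl⟩
    | inr c => simp
  · rintro a (⟨x, hx, rfl⟩ | ⟨c, rfl⟩)
    · rw [nbhd_inter_inl, Set.ncard_image_of_injective _ Sum.inl_injective]
      exact hAd x hx
    · rw [nbhd_inr_inter c (Set.disjoint_left.mp hdisj hu)]
      simp
  · rintro a ⟨y, hy, rfl⟩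
    have hyu : y ≠ u := fun hyu => Set.disjoint_left.mp hdisj hu (hyu ▸ hy)
    rw [nbhd_inl_ne y hyu, Set.ncard_image_of_injective _ Sum.inl_injective]
    exact hBd y hy

lemma lift_edgeCut {A B : Set V} (hdisj : Disjoint A B) (hu : u ∈ A) :
    edgeCut (attachPendantClique G u r) (Sum.inl '' A ∪ Set.range Sum.inr)
      (Sum.inl '' B) = Sym2.map Sum.inl '' edgeCut G A B := by
  ext e
  constructor
  · rintro ⟨he, a, b, rfl, ha, hb⟩
    rw [SimpleGraph.mem_edgeSet] at he
    obtain ⟨y, hy, rfl⟩ := hb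
    cases a with
    | inr c =>
      rw [apc_inr_inl] at he
      exact absurd hy (he ▸ Set.disjoint_left.mp hdisj hu)
    | inl x =>
      rw [apc_inl_inl] at he
      have hx : x ∈ A := by
        rcases ha with ⟨x', hx', h'⟩ | ⟨c, hc⟩
        · rw [Sum.inl.injEq] at h'; exact h' ▸ hx'
        · exact absurd hc Sum.inr_ne_inl
      exact ⟨s(x, y), ⟨G.mem_edgeSet.mpr he, x, y, rfl, hx, hy⟩, rfl⟩
  · rintro ⟨f, ⟨hf, x, y, rfl, hx, hy⟩, rfl⟩
    rw [SimpleGraph.mem_edgeSet] at hf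
    exact ⟨(attachPendantClique G u r).mem_edgeSet.mpr (apc_inl_inl.mpr hf),
      Sum.inl x, Sum.inl y, rfl, Or.inl ⟨x, hx, rfl⟩, ⟨y, hy, rfl⟩⟩

lemma lift_full [Fintype V] {A B : Set V} (h : IsDCut G d A B) :
    ∃ A' B' : Set (V ⊕ Fin r), IsDCut (attachPendantClique G u r) d A' B' ∧
      edgeCut (attachPendantClique G u r) A' B' = Sym2.map Sum.inl '' edgeCut G A B := by
  have hu : u ∈ A ∪ B := h.2.2.2.1 ▸ Set.mem_univ _
  rcases hu with hu | hu
  · exact ⟨_, _, lift_dcut h hu, lift_edgeCut h.2.2.1 hu⟩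
  · refine ⟨_, _, lift_dcut (isDCut_symm h) hu, ?_⟩
    rw [lift_edgeCut h.2.2.1.symm hu, edgeCut_comm]
end main3

/-- Attaching a pendant clique of `r ≥ 2d+1` vertices to a vertex `u` of `G` preserves
the family of edge cuts of (minimal, maximal) `d`-cuts: `F ⊆ E(G)` is the edge cut of a
(minimal, maximal) `d`-cut of `G` iff its image is the edge cut of a (minimal, maximal)
`d`-cut of the resulting graph `H`. -/
theorem pendantClique_cut_correspondence [Fintype V] (G : SimpleGraph V) (d : ℕ)
    (hd : 1 ≤ d) (u : V) (r : ℕ) (hr : 2 * d + 1 ≤ r) (F : Set (Sym2 V))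
    (hF : F ⊆ G.edgeSet) :
    ((∃ A B : Set V, IsDCut G d A B ∧ edgeCut G A B = F) ↔
      (∃ A B : Set (V ⊕ Fin r), IsDCut (attachPendantClique G u r) d A B ∧
        edgeCut (attachPendantClique G u r) A B = Sym2.map Sum.inl '' F)) ∧
    ((∃ A B : Set V, IsMinimalDCut G d A B ∧ edgeCut G A B = F) ↔
      (∃ A B : Set (V ⊕ Fin r), IsMinimalDCut (attachPendantClique G u r) d A B ∧
        edgeCut (attachPendantClique G u r) A B = Sym2.map Sum.inl '' F)) ∧
    ((∃ A B : Set V, IsMaximalDCut G d A B ∧ edgeCut G A B = F) ↔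
      (∃ A B : Set (V ⊕ Fin r), IsMaximalDCut (attachPendantClique G u r) d A B ∧
        edgeCut (attachPendantClique G u r) A B = Sym2.map Sum.inl '' F)) := by
  have mapinj : Function.Injective (Sym2.map (Sum.inl : V → V ⊕ Fin r)) :=
    Sym2.map.injective Sum.inl_injective
  refine ⟨⟨?_, ?_⟩, ⟨?_, ?_⟩, ⟨?_, ?_⟩⟩
  · rintro ⟨A, B, h, rfl⟩
    exact lift_full h
  · rintro ⟨A, B, h, hEq⟩
    obtain ⟨A', B', h', hcut⟩ := restrict_full hr h
    refine ⟨A', B', h', mapinj.image_injective ?_⟩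
    rw [← hcut, hEq]
  · rintro ⟨A, B, ⟨h, hmin⟩, rfl⟩
    obtain ⟨A', B', h', hcut⟩ := lift_full (u := u) (r := r) h
    refine ⟨A', B', ⟨h', ?_⟩, hcut⟩
    intro A2 B2 h2 hss
    obtain ⟨A3, B3, h3, hcut3⟩ := restrict_full hr h2
    rw [hcut3, hcut, image_ssubset mapinj] at hss
    exact hmin A3 B3 h3 hss
  · rintro ⟨A, B, ⟨h, hmin⟩, hEq⟩
    obtain ⟨A', B', h', hcut⟩ := restrict_full hr h
    have hF' : edgeCut G A' B' = F := mapinj.image_injective (by rw [← hcut, hEq])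
    refine ⟨A', B', ⟨h', ?_⟩, hF'⟩
    intro A2 B2 h2 hss
    obtain ⟨A3, B3, h3, hcut3⟩ := lift_full (u := u) (r := r) h2
    refine hmin A3 B3 h3 ?_
    rwa [hcut3, hcut, image_ssubset mapinj]
  · rintro ⟨A, B, ⟨h, hmax⟩, rfl⟩
    obtain ⟨A', B', h', hcut⟩ := lift_full (u := u) (r := r) h
    refine ⟨A', B', ⟨h', ?_⟩, hcut⟩
    intro A2 B2 h2 hss
    obtain ⟨A3, B3, h3, hcut3⟩ := restrict_full hr h2
    rw [hcut3, hcut, image_ssubset mapinj] at hss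
    exact hmax A3 B3 h3 hss
  · rintro ⟨A, B, ⟨h, hmax⟩, hEq⟩
    obtain ⟨A', B', h', hcut⟩ := restrict_full hr h
    have hF' : edgeCut G A' B' = F := mapinj.image_injective (by rw [← hcut, hEq])
    refine ⟨A', B', ⟨h', ?_⟩, hF'⟩
    intro A2 B2 h2 hss
    obtain ⟨A3, B3, h3, hcut3⟩ := lift_full (u := u) (r := r) h2
    refine hmax A3 B3 h3 ?_
    rwa [hcut3, hcut, image_ssubset mapinj]
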